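/- Let O : ℕ≥1 → ℕ and define F(n) = Σ_{d|n} d·O(d). Define O' : ℕ≥1 → ℚ by O'(n) = 2·O(2n) + O(n) if n is odd and O'(n) = 2·O(2n) if n is even. Then for all n ≥ 1, Σ_{d|n} d·O'(d) = F(2n). -/

import Mathlib

theorem orbit_count_square (O : ℕ → ℕ) (F : ℕ → ℕ)
    (hF : ∀ n, 1 ≤ n → F n = ∑ d ∈ n.divisors, d * O d)
    (O' : ℕ → ℚ)
    (hO' : ∀ n, O' n = if Odd n then 2 * O (2 * n) + O n else 2 * O (2 * n)) :
    ∀ n, 1 ≤ n → Finset.sum n.divisors (fun d : ℕ => (d : ℚ) * O' d) = (F (2 * n) : ℚ) := by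
  intro n hn
  have hn0 : n ≠ 0 := by omega
  rw [hF (2 * n) (by omega)]
  push_cast
  -- split RHS by parity
  have hsplit : ∑ e ∈ (2 * n).divisors, (e : ℚ) * O e
      = (∑ e ∈ (2 * n).divisors.filter (fun e => ¬ Odd e), (e : ℚ) * O e)
      + ∑ e ∈ (2 * n).divisors.filter (fun e => Odd e), (e : ℚ) * O e := by
    rw [add_comm]
    exact (Finset.sum_filter_add_sum_filter_not ((2 * n).divisors) (fun e => Odd e) _).symm
  -- even part
  have heven : (∑ e ∈ (2 * n).divisors.filter (fun e => ¬ Odd e), (e : ℚ) * O e)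
      = ∑ d ∈ n.divisors, (d : ℚ) * (2 * O (2 * d)) := by
    refine Finset.sum_nbij' (fun e => e / 2) (fun d => 2 * d) ?_ ?_ ?_ ?_ ?_
    · intro e he
      simp only [Finset.mem_filter, Nat.mem_divisors, Nat.odd_iff, Nat.mod_two_ne_one,
        ne_eq, not_not] at he
      obtain ⟨⟨hd, _⟩, hev⟩ := he
      have h2 : 2 ∣ e := Nat.dvd_of_mod_eq_zero hev
      obtain ⟨k, rfl⟩ := h2
      have hk : 2 * k / 2 = k := by omega
      simp only [hk]
      exact Nat.mem_divisors.mpr ⟨(mul_dvd_mul_iff_left (by norm_num : (2:ℕ) ≠ 0)).mp hd, hn0⟩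
    · intro d hd
      simp only [Nat.mem_divisors] at hd
      simp only [Finset.mem_filter, Nat.mem_divisors]
      refine ⟨⟨mul_dvd_mul_left 2 hd.1, by omega⟩, ?_⟩
      simp [Nat.odd_iff, Nat.mul_mod_right]
    · intro e he
      simp only [Finset.mem_filter, Nat.odd_iff, Nat.mod_two_ne_one, ne_eq, not_not] at he
      have h2 : 2 ∣ e := Nat.dvd_of_mod_eq_zero he.2
      beta_reduce
      omega
    · intro d _
      beta_reduce
      omega
    · intro e he
      simp only [Finset.mem_filter, Nat.odd_iff, Nat.mod_two_ne_one, ne_eq, not_not] at he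
      have h2 : 2 ∣ e := Nat.dvd_of_mod_eq_zero he.2
      obtain ⟨k, rfl⟩ := h2
      have hk : 2 * k / 2 = k := by omega
      simp only [hk]
      push_cast
      ring
  -- odd part: odd divisors of 2n = odd divisors of n
  have hodd : ((2 * n).divisors.filter (fun e => Odd e))
      = n.divisors.filter (fun e => Odd e) := by
    ext e
    simp only [Finset.mem_filter, Nat.mem_divisors]
    constructor
    · rintro ⟨⟨hd, _⟩, ho⟩
      refine ⟨⟨?_, hn0⟩, ho⟩
      have hc : Nat.Coprime e 2 := Nat.Coprime.symm (Nat.coprime_two_left.mpr ho)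
      exact (Nat.Coprime.dvd_of_dvd_mul_left hc hd)
    · rintro ⟨⟨hd, _⟩, ho⟩
      exact ⟨⟨hd.mul_left 2, by omega⟩, ho⟩
  -- LHS
  have hlhs : ∑ d ∈ n.divisors, (d : ℚ) * O' d
      = (∑ d ∈ n.divisors, (d : ℚ) * (2 * O (2 * d)))
        + ∑ d ∈ n.divisors.filter (fun e => Odd e), (d : ℚ) * O d := by
    rw [Finset.sum_filter, ← Finset.sum_add_distrib]
    refine Finset.sum_congr rfl fun d _ => ?_
    rw [hO' d]
    by_cases h : Odd d <;> simp [h] <;> ring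
  rw [hlhs, hsplit, heven, hodd]
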